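/- Let G be a finite strongly connected directed graph (loops and multiple edges allowed; for any two vertices u, v there exists a path from u to v). Then for any vertices u, v of G, the sequence {#L^G_{u,v,n}}_{n≥0} counting the paths from u to v of length n is regular. Equivalently, for an irreducible square matrix M with nonnegative integer entries, every entry sequence {(M^n)_{u,v}}_n is regular. -/

import Mathlib

open Filter
open scoped Classical

namespace Paper

/-- `p : Fin n → E` is a path from `u` to `v` in the directed graph with source and
target maps `src`, `tgt : E → V`: consecutive edges are compatible, the first edge
starts at `u` and the last edge ends at `v`; the empty path (`n = 0`) requires `u = v`. -/
def IsPath {V E : Type*} (src tgt : E → V) (u v : V) {n : ℕ} (p : Fin n → E) : Prop :=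
  (∀ (i : ℕ) (h : i + 1 < n), tgt (p ⟨i, Nat.lt_of_succ_lt h⟩) = src (p ⟨i + 1, h⟩)) ∧
  (∀ h : 0 < n, src (p ⟨0, h⟩) = u ∧ tgt (p ⟨n - 1, Nat.sub_lt h one_pos⟩) = v) ∧
  (n = 0 → u = v)

/-- The number of paths of length `n` from `u` to `v`, i.e. `#L^G_{u,v,n}`. -/
noncomputable def numPaths {V E : Type*} [Fintype E] (src tgt : E → V) (u v : V) (n : ℕ) : ℕ :=
  Fintype.card {p : Fin n → E // IsPath src tgt u v p}

/-- A sequence of nonnegative reals is regular if, along each arithmetic progression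
modulo some `q ≥ 1`, it is either eventually zero or asymptotic to `a k^b c^k`
with `a > 0`, `b ∈ ℕ`, `c ≥ 1`. -/
def RegularSeq (x : ℕ → ℝ) : Prop :=
  ∃ q : ℕ, 0 < q ∧ ∀ r : ℕ, r < q →
    (∀ᶠ k in atTop, x (q * k + r) = 0) ∨
    (∃ a : ℝ, 0 < a ∧ ∃ b : ℕ, ∃ c : ℝ, 1 ≤ c ∧
      Tendsto (fun k : ℕ => x (q * k + r) / (a * (k : ℝ) ^ b * c ^ k)) atTop (nhds 1))

end Paper

namespace PFAux

set_option linter.unusedSectionVars false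

variable {ι : Type*} [Fintype ι] [Nonempty ι] [DecidableEq ι]

lemma mulVec_apply' (R : Matrix ι ι ℝ) (v : ι → ℝ) (i : ι) :
    R.mulVec v i = ∑ j, R i j * v j := rfl

lemma mulVec_pos (R : Matrix ι ι ℝ) (hR : ∀ i j, 0 < R i j) (v : ι → ℝ)
    (hv : ∀ j, 0 < v j) (i : ι) : 0 < R.mulVec v i := by
  rw [mulVec_apply']
  exact Finset.sum_pos (fun j _ => mul_pos (hR i j) (hv j)) Finset.univ_nonempty

set_option maxHeartbeats 2000000 in
lemma key_convergence (R : Matrix ι ι ℝ) (hR : ∀ i j, 0 < R i j)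
    (x0 : ι → ℝ) (hx0 : ∀ i, 0 < x0 i) :
    ∃ lam : ℝ, 0 < lam ∧
      (∀ t : ℝ, (∀ i, t * x0 i ≤ R.mulVec x0 i) → t ≤ lam) ∧
      ∀ i : ι, ∃ L : ℝ, 0 < L ∧
        Tendsto (fun k : ℕ => ((R ^ k).mulVec x0) i / lam ^ k) atTop (nhds L) := by
  classical
  set y : ℕ → ι → ℝ := fun k => (R ^ k).mulVec x0 with hy_def
  have hy0 : y 0 = x0 := by simp [hy_def, Matrix.one_mulVec]
  have hy_succ : ∀ k, y (k + 1) = R.mulVec (y k) := by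
    intro k
    simp only [hy_def]
    rw [pow_succ', ← Matrix.mulVec_mulVec]
  have hypos : ∀ k i, 0 < y k i := by
    intro k
    induction k with
    | zero => intro i; rw [hy0]; exact hx0 i
    | succ k ih => intro i; rw [hy_succ]; exact mulVec_pos R hR _ ih i
  have hne : (Finset.univ : Finset ι).Nonempty := Finset.univ_nonempty
  set F : ℕ → ℝ := fun k => Finset.univ.inf' hne (fun i => y (k + 1) i / y k i) with hF_def
  set G : ℕ → ℝ := fun k => Finset.univ.sup' hne (fun i => y (k + 1) i / y k i) with hG_def
  have hFle : ∀ k i, F k * y k i ≤ y (k + 1) i := by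
    intro k i
    have h := Finset.inf'_le (s := Finset.univ) (fun i => y (k + 1) i / y k i)
      (Finset.mem_univ i)
    calc F k * y k i ≤ (y (k + 1) i / y k i) * y k i :=
          mul_le_mul_of_nonneg_right h (hypos k i).le
      _ = y (k + 1) i := div_mul_cancel₀ _ (hypos k i).ne'
  have hGle : ∀ k i, y (k + 1) i ≤ G k * y k i := by
    intro k i
    have h := Finset.le_sup' (s := Finset.univ) (fun i => y (k + 1) i / y k i)
      (Finset.mem_univ i)
    calc y (k + 1) i = (y (k + 1) i / y k i) * y k i :=
          (div_mul_cancel₀ _ (hypos k i).ne').symm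
      _ ≤ G k * y k i := mul_le_mul_of_nonneg_right h (hypos k i).le
  have hFpos : ∀ k, 0 < F k := by
    intro k
    rw [hF_def, Finset.lt_inf'_iff]
    exact fun i _ => div_pos (hypos _ _) (hypos _ _)
  have hFG : ∀ k, F k ≤ G k := by
    intro k
    obtain ⟨i⟩ := ‹Nonempty ι›
    exact le_trans (Finset.inf'_le _ (Finset.mem_univ i))
      (Finset.le_sup' (fun i => y (k + 1) i / y k i) (Finset.mem_univ i))
  have hmono : ∀ (v w : ι → ℝ), (∀ j, v j ≤ w j) → ∀ i, R.mulVec v i ≤ R.mulVec w i := by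
    intro v w h i
    rw [mulVec_apply', mulVec_apply']
    exact Finset.sum_le_sum fun j _ => mul_le_mul_of_nonneg_left (h j) (hR i j).le
  have hFmono : Monotone F := by
    apply monotone_nat_of_le_succ
    intro k
    apply Finset.le_inf'
    intro i _
    rw [le_div_iff₀ (hypos (k + 1) i)]
    have h1 : R.mulVec (fun j => F k * y k j) i ≤ R.mulVec (y (k + 1)) i :=
      hmono _ _ (fun j => hFle k j) i
    have h2 : R.mulVec (fun j => F k * y k j) i = F k * y (k + 1) i := by
      have : (fun j => F k * y k j) = F k • y k := by
        funext j; simp [smul_eq_mul]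
      rw [this, Matrix.mulVec_smul, hy_succ]
      simp [smul_eq_mul]
    rw [← hy_succ] at h1
    calc F k * y (k + 1) i = R.mulVec (fun j => F k * y k j) i := h2.symm
      _ ≤ y (k + 2) i := by rw [hy_succ (k+1)]; exact hmono _ _ (fun j => hFle k j) i
  have hGanti : Antitone G := by
    apply antitone_nat_of_succ_le
    intro k
    apply Finset.sup'_le
    intro i _
    rw [div_le_iff₀ (hypos (k + 1) i)]
    have h2 : R.mulVec (fun j => G k * y k j) i = G k * y (k + 1) i := by
      have : (fun j => G k * y k j) = G k • y k := by
        funext j; simp [smul_eq_mul]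
      rw [this, Matrix.mulVec_smul, hy_succ]
      simp [smul_eq_mul]
    calc y (k + 2) i = R.mulVec (y (k+1)) i := by rw [hy_succ (k+1)]
      _ ≤ R.mulVec (fun j => G k * y k j) i := hmono _ _ (fun j => hGle k j) i
      _ = G k * y (k + 1) i := h2
  -- entrywise bounds on R
  have hprodne : (Finset.univ : Finset (ι × ι)).Nonempty := Finset.univ_nonempty
  set m : ℝ := Finset.univ.inf' hprodne (fun p : ι × ι => R p.1 p.2) with hm_def
  set Mb : ℝ := Finset.univ.sup' hprodne (fun p : ι × ι => R p.1 p.2) with hMb_def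
  have hm_pos : 0 < m := by
    rw [hm_def, Finset.lt_inf'_iff]; exact fun p _ => hR p.1 p.2
  have hmle : ∀ i j, m ≤ R i j := fun i j =>
    Finset.inf'_le (fun p : ι × ι => R p.1 p.2) (Finset.mem_univ (i, j))
  have hleM : ∀ i j, R i j ≤ Mb := fun i j =>
    Finset.le_sup' (fun p : ι × ι => R p.1 p.2) (Finset.mem_univ (i, j))
  have hMb_pos : 0 < Mb := by
    obtain ⟨i⟩ := ‹Nonempty ι›
    exact lt_of_lt_of_le (hR i i) (hleM i i)
  have hmM : m ≤ Mb := by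
    obtain ⟨i⟩ := ‹Nonempty ι›
    exact (hmle i i).trans (hleM i i)
  set δ : ℝ := m / Mb with hδ_def
  have hδpos : 0 < δ := div_pos hm_pos hMb_pos
  have hδle1 : δ ≤ 1 := (div_le_one hMb_pos).mpr hmM
  -- contraction
  have hcontr : ∀ k, G (k + 1) - F (k + 1) ≤ (1 - δ) * (G k - F k) := by
    intro k
    set T : ℝ := ∑ j, y k j with hT_def
    have hTpos : 0 < T :=
      Finset.sum_pos (fun j _ => hypos k j) Finset.univ_nonempty
    set u : ι → ℝ := fun j => y (k + 1) j - F k * y k j with hu_def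
    have hu0 : ∀ j, 0 ≤ u j := fun j => sub_nonneg.mpr (hFle k j)
    have huB : ∀ j, u j ≤ (G k - F k) * y k j := by
      intro j
      have := hGle k j
      simp only [hu_def]
      nlinarith
    set E : ℝ := δ * (∑ j, u j) / T with hE_def
    have hDub : ∀ i, y (k + 1) i ≤ Mb * T := by
      intro i
      rw [hy_succ, mulVec_apply', hT_def, Finset.mul_sum]
      exact Finset.sum_le_sum fun j _ =>
        mul_le_mul_of_nonneg_right (hleM i j) (hypos k j).le
    -- the key two-sided bound for A i := (∑ j, R i j * u j) / y (k+1) i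
    have hkey : ∀ i, E ≤ (∑ j, R i j * u j) / y (k + 1) i ∧
        (∑ j, R i j * u j) / y (k + 1) i ≤ (1 - δ) * (G k - F k) + E := by
      intro i
      set D : ℝ := y (k + 1) i with hD_def
      have hDpos : 0 < D := hypos (k + 1) i
      have hDsum : D = ∑ j, R i j * y k j := by
        rw [hD_def, hy_succ, mulVec_apply']
      set c : ι → ℝ := fun j => R i j * y k j / D - δ * y k j / T with hc_def
      have hδD : δ * D ≤ m * T := by
        have h1 : δ * D ≤ δ * (Mb * T) :=
          mul_le_mul_of_nonneg_left (hDub i) hδpos.le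
        have h2 : δ * (Mb * T) = m * T := by
          field_simp [hδ_def]
          rw [hδ_def, div_mul_cancel₀ _ hMb_pos.ne']
        linarith
      have hc0 : ∀ j, 0 ≤ c j := by
        intro j
        rw [hc_def, sub_nonneg, div_le_div_iff₀ hTpos hDpos]
        calc δ * y k j * D = y k j * (δ * D) := by ring
          _ ≤ y k j * (m * T) := mul_le_mul_of_nonneg_left hδD (hypos k j).le
          _ ≤ y k j * (R i j * T) :=
              mul_le_mul_of_nonneg_left
                (mul_le_mul_of_nonneg_right (hmle i j) hTpos.le) (hypos k j).le
          _ = R i j * y k j * T := by ring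
      have hcsum : ∑ j, c j = 1 - δ := by
        rw [hc_def]
        rw [Finset.sum_sub_distrib]
        have h1 : ∑ j, R i j * y k j / D = 1 := by
          rw [← Finset.sum_div, ← hDsum, div_self hDpos.ne']
        have h2 : ∑ j, δ * y k j / T = δ := by
          have : ∑ j, δ * y k j / T = δ * T / T := by
            rw [← Finset.sum_div, ← Finset.mul_sum, ← hT_def]
          rw [this, mul_div_assoc, div_self hTpos.ne', mul_one]
        rw [h1, h2]
      have hterm : ∀ j, c j * (u j / y k j) = R i j * u j / D - δ * u j / T := by
        intro j
        rw [hc_def]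
        have hyj := (hypos k j).ne'
        field_simp
      have hA : (∑ j, R i j * u j) / D - E = ∑ j, c j * (u j / y k j) := by
        rw [Finset.sum_congr rfl (fun j _ => hterm j), Finset.sum_sub_distrib]
        have h1 : ∑ j, R i j * u j / D = (∑ j, R i j * u j) / D := by
          rw [Finset.sum_div]
        have h2 : ∑ j, δ * u j / T = E := by
          rw [hE_def, Finset.mul_sum, Finset.sum_div]
        rw [h1, h2]
      have hφub : ∀ j, u j / y k j ≤ G k - F k := by
        intro j
        rw [div_le_iff₀ (hypos k j)]
        exact huB j
      have hφ0 : ∀ j, 0 ≤ u j / y k j := fun j =>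
        div_nonneg (hu0 j) (hypos k j).le
      constructor
      · have : 0 ≤ ∑ j, c j * (u j / y k j) :=
          Finset.sum_nonneg fun j _ => mul_nonneg (hc0 j) (hφ0 j)
        linarith [hA]
      · have hle : ∑ j, c j * (u j / y k j) ≤ (1 - δ) * (G k - F k) := by
        -- ∑ c j * φ j ≤ (∑ c j) * (G k - F k)
          calc ∑ j, c j * (u j / y k j) ≤ ∑ j, c j * (G k - F k) :=
                Finset.sum_le_sum fun j _ =>
                  mul_le_mul_of_nonneg_left (hφub j) (hc0 j)
            _ = (1 - δ) * (G k - F k) := by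
                rw [← Finset.sum_mul, hcsum]
        linarith [hA]
    -- ratio formula
    have hratio : ∀ i, y (k + 2) i / y (k + 1) i
        = F k + (∑ j, R i j * u j) / y (k + 1) i := by
      intro i
      have hexp : y (k + 2) i = F k * y (k + 1) i + ∑ j, R i j * u j := by
        rw [hy_succ (k + 1), mulVec_apply']
        have h2 : y (k + 1) i = ∑ j, R i j * y k j := by
          rw [hy_succ, mulVec_apply']
        rw [h2, Finset.mul_sum, ← Finset.sum_add_distrib]
        apply Finset.sum_congr rfl
        intro j _
        simp only [hu_def]
        ring
      rw [hexp, add_div, mul_div_assoc, div_self (hypos (k+1) i).ne', mul_one]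
    obtain ⟨i1, _, hi1⟩ := Finset.exists_mem_eq_sup' hne (fun i => y (k + 2) i / y (k + 1) i)
    obtain ⟨i2, _, hi2⟩ := Finset.exists_mem_eq_inf' hne (fun i => y (k + 2) i / y (k + 1) i)
    have hG1 : G (k + 1) = F k + (∑ j, R i1 j * u j) / y (k + 1) i1 := by
      have h : G (k + 1) = y (k + 2) i1 / y (k + 1) i1 := hi1
      rw [h]; exact hratio i1
    have hF1 : F (k + 1) = F k + (∑ j, R i2 j * u j) / y (k + 1) i2 := by
      have h : F (k + 1) = y (k + 2) i2 / y (k + 1) i2 := hi2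
      rw [h]; exact hratio i2
    have h1 := (hkey i1).2
    have h2 := (hkey i2).1
    rw [hG1, hF1]
    linarith
  set θ : ℝ := 1 - δ with hθ_def
  have hθ0 : 0 ≤ θ := by simp [hθ_def]; linarith
  have hθ1 : θ < 1 := by simp [hθ_def]; linarith
  have hGF0 : 0 ≤ G 0 - F 0 := by linarith [hFG 0]
  have hGFk : ∀ k, G k - F k ≤ (G 0 - F 0) * θ ^ k := by
    intro k
    induction k with
    | zero => simp
    | succ k ih =>
      calc G (k + 1) - F (k + 1) ≤ θ * (G k - F k) := hcontr k
        _ ≤ θ * ((G 0 - F 0) * θ ^ k) := mul_le_mul_of_nonneg_left ih hθ0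
        _ = (G 0 - F 0) * θ ^ (k + 1) := by ring
  have hbdd : BddAbove (Set.range F) := by
    refine ⟨G 0, ?_⟩
    rintro _ ⟨k, rfl⟩
    exact (hFG k).trans (hGanti (Nat.zero_le k))
  set lam : ℝ := ⨆ k, F k with hlam_def
  have hFlam : ∀ k, F k ≤ lam := fun k => le_ciSup hbdd k
  have hlamG : ∀ k, lam ≤ G k := by
    intro k
    apply ciSup_le
    intro j
    rcases le_total j k with h | h
    · exact (hFmono h).trans (hFG k)
    · exact (hFG j).trans (hGanti h)
  have hlam_pos : 0 < lam := lt_of_lt_of_le (hFpos 0) (hFlam 0)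
  refine ⟨lam, hlam_pos, ?_, ?_⟩
  · intro t ht
    refine le_trans ?_ (hFlam 0)
    apply Finset.le_inf'
    intro i _
    rw [le_div_iff₀ (hypos 0 i)]
    have := ht i
    rw [hy0]
    calc t * x0 i ≤ R.mulVec x0 i := ht i
      _ = y 1 i := by rw [hy_succ 0, hy0]
  · intro i
    set u : ℕ → ℝ := fun k => y k i / lam ^ k with hu_def
    have hupos : ∀ k, 0 < u k := fun k => div_pos (hypos k i) (pow_pos hlam_pos k)
    set Cb : ℝ := (G 0 - F 0) / lam with hCb_def
    have hCb0 : 0 ≤ Cb := div_nonneg hGF0 hlam_pos.le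
    set c : ℕ → ℝ := fun k => Cb * θ ^ k with hc_def
    have hc0 : ∀ k, 0 ≤ c k := fun k => mul_nonneg hCb0 (pow_nonneg hθ0 k)
    have hediff : ∀ k, |y (k + 1) i - lam * y k i| ≤ ((G 0 - F 0) * θ ^ k) * y k i := by
      intro k
      rw [abs_le]
      have hyk := hypos k i
      have h1 : (lam - (G k - F k)) * y k i ≤ F k * y k i :=
        mul_le_mul_of_nonneg_right (by linarith [hlamG k]) hyk.le
      have h2 : G k * y k i ≤ (lam + (G k - F k)) * y k i :=
        mul_le_mul_of_nonneg_right (by linarith [hFlam k]) hyk.le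
      have h3 : (G k - F k) * y k i ≤ ((G 0 - F 0) * θ ^ k) * y k i :=
        mul_le_mul_of_nonneg_right (hGFk k) hyk.le
      constructor
      · have := hFle k i
        nlinarith
      · have := hGle k i
        nlinarith
    have hdiff : ∀ k, |u (k + 1) - u k| ≤ c k * u k := by
      intro k
      have hlp : (0:ℝ) < lam ^ (k + 1) := pow_pos hlam_pos (k + 1)
      have heq : u (k + 1) - u k = (y (k + 1) i - lam * y k i) / lam ^ (k + 1) := by
        simp only [hu_def]
        rw [div_sub_div _ _ (pow_ne_zero (k+1) hlam_pos.ne') (pow_ne_zero k hlam_pos.ne')]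
        rw [div_eq_div_iff (by positivity) (by positivity)]
        ring
      rw [heq, abs_div, abs_of_pos hlp]
      rw [div_le_iff₀ hlp]
      have hcan : y k i / lam ^ k * lam ^ k = y k i :=
        div_mul_cancel₀ _ (pow_ne_zero k hlam_pos.ne')
      calc |y (k + 1) i - lam * y k i| ≤ ((G 0 - F 0) * θ ^ k) * y k i := hediff k
        _ = (Cb * lam) * θ ^ k * y k i := by
            rw [hCb_def, div_mul_cancel₀ _ hlam_pos.ne']
        _ = c k * u k * lam ^ (k + 1) := by
            simp only [hc_def, hu_def]
            rw [pow_succ,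
              show Cb * θ ^ k * (y k i / lam ^ k) * (lam ^ k * lam)
                = Cb * lam * θ ^ k * (y k i / lam ^ k * lam ^ k) from by ring, hcan]
    have hgeo : ∀ k : ℕ, ∑ j ∈ Finset.range k, θ ^ j ≤ 1 / δ := by
      intro k
      rw [le_div_iff₀ hδpos]
      have h := geom_sum_mul θ k
      have hθk : (0:ℝ) ≤ θ ^ k := pow_nonneg hθ0 k
      nlinarith [h]
    have hcsum : ∀ k : ℕ, ∑ j ∈ Finset.range k, c j ≤ Cb * (1 / δ) := by
      intro k
      simp only [hc_def]
      rw [← Finset.mul_sum]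
      exact mul_le_mul_of_nonneg_left (hgeo k) hCb0
    -- upper bound on u
    have hub : ∀ k, u k ≤ u 0 * Real.exp (Cb * (1 / δ)) := by
      have hstep : ∀ k, u k ≤ u 0 * Real.exp (∑ j ∈ Finset.range k, c j) := by
        intro k
        induction k with
        | zero => simp
        | succ k ih =>
          have h1 : u (k + 1) ≤ u k * (1 + c k) := by
            have := hdiff k
            have := abs_le.mp this
            nlinarith [hupos k]
          have h2 : (1 : ℝ) + c k ≤ Real.exp (c k) := by
            have := Real.add_one_le_exp (c k)
            linarith
          calc u (k + 1) ≤ u k * (1 + c k) := h1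
            _ ≤ (u 0 * Real.exp (∑ j ∈ Finset.range k, c j)) * (1 + c k) := by
                apply mul_le_mul_of_nonneg_right ih
                linarith [hc0 k]
            _ ≤ (u 0 * Real.exp (∑ j ∈ Finset.range k, c j)) * Real.exp (c k) := by
                exact mul_le_mul_of_nonneg_left h2
                  (mul_nonneg (hupos 0).le (Real.exp_pos _).le)
            _ = u 0 * Real.exp (∑ j ∈ Finset.range (k + 1), c j) := by
                rw [Finset.sum_range_succ, Real.exp_add]
                ring
      intro k
      calc u k ≤ u 0 * Real.exp (∑ j ∈ Finset.range k, c j) := hstep k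
        _ ≤ u 0 * Real.exp (Cb * (1 / δ)) := by
            apply mul_le_mul_of_nonneg_left (Real.exp_le_exp.mpr (hcsum k)) (hupos 0).le
    set U : ℝ := u 0 * Real.exp (Cb * (1 / δ)) with hU_def
    have hU0 : 0 < U := mul_pos (hupos 0) (Real.exp_pos _)
    have hdist : ∀ k, dist (u k) (u (k + 1)) ≤ (U * Cb) * θ ^ k := by
      intro k
      rw [Real.dist_eq, abs_sub_comm]
      calc |u (k + 1) - u k| ≤ c k * u k := hdiff k
        _ ≤ c k * U := mul_le_mul_of_nonneg_left (hub k) (hc0 k)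
        _ = (U * Cb) * θ ^ k := by simp only [hc_def]; ring
    have hsumm : Summable (fun k : ℕ => (U * Cb) * θ ^ k) :=
      (summable_geometric_of_lt_one hθ0 hθ1).mul_left _
    have hcauchy : CauchySeq u := cauchySeq_of_dist_le_of_summable _ hdist hsumm
    obtain ⟨L, hL⟩ := cauchySeq_tendsto_of_complete hcauchy
    -- positivity of the limit
    have htail : Tendsto (fun k : ℕ => Cb * (1 / δ) * θ ^ k) atTop (nhds 0) := by
      have h := (tendsto_pow_atTop_nhds_zero_of_lt_one hθ0 hθ1).const_mul (Cb * (1 / δ))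
      rw [mul_zero] at h
      exact h
    obtain ⟨k1, hk1⟩ := (htail.eventually (eventually_le_nhds (by norm_num : (0:ℝ) < 1/2))).exists
    -- tail sums are ≤ 1/2
    have hIco : ∀ k, k1 ≤ k → ∑ j ∈ Finset.Ico k1 k, c j ≤ 1 / 2 := by
      intro k hk
      have h1 : ∑ j ∈ Finset.Ico k1 k, c j = Cb * θ ^ k1 * ∑ j ∈ Finset.range (k - k1), θ ^ j := by
        rw [Finset.sum_Ico_eq_sum_range]
        rw [Finset.mul_sum]
        apply Finset.sum_congr rfl
        intro j _
        simp only [hc_def]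
        rw [pow_add]
        ring
      rw [h1]
      calc Cb * θ ^ k1 * ∑ j ∈ Finset.range (k - k1), θ ^ j
          ≤ Cb * θ ^ k1 * (1 / δ) := by
            apply mul_le_mul_of_nonneg_left (hgeo _)
            exact mul_nonneg hCb0 (pow_nonneg hθ0 k1)
        _ = Cb * (1 / δ) * θ ^ k1 := by ring
        _ ≤ 1 / 2 := hk1
    have hlow : ∀ k, k1 ≤ k → u k1 * (1 - ∑ j ∈ Finset.Ico k1 k, c j) ≤ u k := by
      intro k hk
      induction k, hk using Nat.le_induction with
      | base => simp
      | succ k hk ih =>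
        have hS : ∑ j ∈ Finset.Ico k1 (k + 1), c j
            = ∑ j ∈ Finset.Ico k1 k, c j + c k := Finset.sum_Ico_succ_top hk _
        have hck : c k ≤ 1 / 2 := by
          have hθmono : θ ^ k ≤ θ ^ k1 := pow_le_pow_of_le_one hθ0 hθ1.le hk
          have hδinv : (1:ℝ) ≤ 1 / δ := by
            rw [le_div_iff₀ hδpos]; linarith
          have h1 : c k ≤ Cb * θ ^ k1 := by
            simp only [hc_def]
            exact mul_le_mul_of_nonneg_left hθmono hCb0
          have h2 : Cb * θ ^ k1 ≤ Cb * (1 / δ) * θ ^ k1 := by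
            have h3 : Cb * 1 ≤ Cb * (1 / δ) := mul_le_mul_of_nonneg_left hδinv hCb0
            have h4 := mul_le_mul_of_nonneg_right h3 (pow_nonneg hθ0 k1)
            calc Cb * θ ^ k1 = Cb * 1 * θ ^ k1 := by ring
              _ ≤ Cb * (1 / δ) * θ ^ k1 := h4
          linarith [hk1]
        have hstep : (1 - c k) * u k ≤ u (k + 1) := by
          have h := (abs_le.mp (hdiff k)).1
          have hr : (1 - c k) * u k = u k - c k * u k := by ring
          linarith
        have hSk0 : 0 ≤ ∑ j ∈ Finset.Ico k1 k, c j :=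
          Finset.sum_nonneg fun j _ => hc0 j
        calc u k1 * (1 - ∑ j ∈ Finset.Ico k1 (k + 1), c j)
            = u k1 * (1 - ∑ j ∈ Finset.Ico k1 k, c j) - u k1 * c k := by rw [hS]; ring
          _ ≤ (1 - c k) * (u k1 * (1 - ∑ j ∈ Finset.Ico k1 k, c j)) := by
              have hX : u k1 * (1 - ∑ j ∈ Finset.Ico k1 k, c j) ≤ u k1 * 1 :=
                mul_le_mul_of_nonneg_left (by linarith) (hupos k1).le
              have hcX : c k * (u k1 * (1 - ∑ j ∈ Finset.Ico k1 k, c j)) ≤ c k * u k1 :=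
                mul_le_mul_of_nonneg_left (by linarith) (hc0 k)
              have hr : (1 - c k) * (u k1 * (1 - ∑ j ∈ Finset.Ico k1 k, c j))
                  = u k1 * (1 - ∑ j ∈ Finset.Ico k1 k, c j)
                    - c k * (u k1 * (1 - ∑ j ∈ Finset.Ico k1 k, c j)) := by ring
              linarith
          _ ≤ (1 - c k) * u k := by
              apply mul_le_mul_of_nonneg_left ih
              linarith [hck]
          _ ≤ u (k + 1) := hstep
    have hLpos : 0 < L := by
      have hge : ∀ k, k1 ≤ k → u k1 / 2 ≤ u k := by
        intro k hk
        calc u k1 / 2 = u k1 * (1 - 1/2) := by ring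
          _ ≤ u k1 * (1 - ∑ j ∈ Finset.Ico k1 k, c j) :=
              mul_le_mul_of_nonneg_left (by linarith [hIco k hk]) (hupos k1).le
          _ ≤ u k := hlow k hk
      have : u k1 / 2 ≤ L :=
        ge_of_tendsto hL (eventually_atTop.mpr ⟨k1, hge⟩)
      linarith [hupos k1]
    exact ⟨L, hLpos, hL⟩


section NatMatrix

variable {W : Type*} [Fintype W] [DecidableEq W]

lemma entry_mul_le (X Y : Matrix W W ℕ) (i j k : W) :
    X i j * Y j k ≤ (X * Y) i k := by
  rw [Matrix.mul_apply]
  exact Finset.single_le_sum (f := fun j' => X i j' * Y j' k)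
    (fun _ _ => Nat.zero_le _) (Finset.mem_univ j)

lemma pos_pow_trans {M : Matrix W W ℕ} {s t : ℕ} {i c f : W}
    (h1 : 0 < (M ^ s) i c) (h2 : 0 < (M ^ t) c f) : 0 < (M ^ (s + t)) i f := by
  have h := entry_mul_le (M ^ s) (M ^ t) i c f
  rw [← pow_add] at h
  exact lt_of_lt_of_le (Nat.mul_pos h1 h2) h

lemma sum_restrict (C : Set W) [Fintype ↥C] (f : W → ℕ)
    (h : ∀ e, f e ≠ 0 → e ∈ C) : ∑ e : W, f e = ∑ e : ↥C, f e.val := by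
  classical
  rw [← Finset.sum_filter_of_ne (fun x _ hx => h x hx)]
  exact Finset.sum_subtype _ (by simp) f

/-- A sequence of nonnegative reals is regular (as in Paper.RegularSeq). -/
theorem regular_matrix (M : Matrix W W ℕ)
    (hirr : ∀ a b : W, ∃ n : ℕ, 0 < (M ^ n) a b) (a b : W) :
    ∃ q : ℕ, 0 < q ∧ ∀ r : ℕ, r < q →
      (∀ᶠ k in atTop, ((M ^ (q * k + r)) a b : ℝ) = 0) ∨
      (∃ A : ℝ, 0 < A ∧ ∃ B : ℕ, ∃ cc : ℝ, 1 ≤ cc ∧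
        Tendsto (fun k : ℕ => ((M ^ (q * k + r)) a b : ℝ) / (A * (k : ℝ) ^ B * cc ^ k))
          atTop (nhds 1)) := by
  classical
  by_cases hq : ∃ q : ℕ, 0 < q ∧ 0 < (M ^ q) a a
  case neg =>
    push_neg at hq
    refine ⟨1, one_pos, fun r hr => Or.inl ?_⟩
    rw [eventually_atTop]
    refine ⟨1, fun n hn => ?_⟩
    have hn1 : 1 ≤ 1 * n + r := by omega
    have hz : (M ^ (1 * n + r)) a b = 0 := by
      by_contra h0
      have hpos : 0 < (M ^ (1 * n + r)) a b := Nat.pos_of_ne_zero h0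
      obtain ⟨m, hm⟩ := hirr b a
      have := pos_pow_trans hpos hm
      have h2 := hq (1 * n + r + m) (by omega)
      omega
    rw [hz]; norm_num
  case pos =>
  obtain ⟨q, hq0, hqaa⟩ := hq
  set Q : Matrix W W ℕ := M ^ q with hQ_def
  have hQpow : ∀ k, Q ^ k = M ^ (q * k) := fun k => by rw [hQ_def, ← pow_mul]
  set C : Set W := {c | ∃ k : ℕ, 0 < (Q ^ k) a c} with hC_def
  have haC : a ∈ C := ⟨0, by simp [Matrix.one_apply]⟩
  letI : Fintype ↥C := Fintype.ofFinite ↥C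
  haveI : Nonempty ↥C := ⟨⟨a, haC⟩⟩
  letI : DecidableEq ↥C := Classical.decEq _
  have hfwd : ∀ (c : W), c ∈ C → ∀ (k : ℕ) (d : W), 0 < (Q ^ k) c d → d ∈ C := by
    rintro c ⟨k1, hk1⟩ k d h
    exact ⟨k1 + k, pos_pow_trans hk1 h⟩
  set P : Matrix ↥C ↥C ℕ := fun c d => Q c.val d.val with hP_def
  have hblock : ∀ (k : ℕ) (c d : ↥C), (P ^ k) c d = (Q ^ k) c.val d.val := by
    intro k
    induction k with
    | zero =>
      intro c d
      simp [Matrix.one_apply, Subtype.ext_iff]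
    | succ k ih =>
      intro c d
      rw [pow_succ, pow_succ, Matrix.mul_apply, Matrix.mul_apply]
      have hrestr : ∑ e : W, (Q ^ k) c.val e * Q e d.val
          = ∑ e : ↥C, (Q ^ k) c.val e.val * Q e.val d.val := by
        apply sum_restrict
        intro e he
        have h1 : (Q ^ k) c.val e ≠ 0 := fun hz => he (by rw [hz, zero_mul])
        exact hfwd c.val c.2 k e (Nat.pos_of_ne_zero h1)
      rw [hrestr]
      apply Finset.sum_congr rfl
      intro e _
      rw [ih c e, hP_def]
  have hQaa : ∀ j : ℕ, 0 < (Q ^ j) a a := by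
    intro j
    induction j with
    | zero => simp [Matrix.one_apply]
    | succ j ih =>
      have h1 : 0 < (Q ^ 1) a a := by rw [pow_one, hQ_def]; exact hqaa
      exact pos_pow_trans ih h1
  have hret : ∀ c : ↥C, ∃ s : ℕ, 0 < (Q ^ s) c.val a := by
    intro c
    obtain ⟨l, hl⟩ := c.2
    obtain ⟨mr, hm⟩ := hirr c.val a
    have hloop : 0 < (M ^ (q * l + mr)) a a := by
      have hl' : 0 < (M ^ (q * l)) a c.val := by rw [← hQpow]; exact hl
      exact pos_pow_trans hl' hm
    -- iterate the loop q-1 times after the path c → a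
    have hiter : ∀ j : ℕ, 0 < (M ^ (mr + j * (q * l + mr))) c.val a := by
      intro j
      induction j with
      | zero => simpa using hm
      | succ j ih =>
        have := pos_pow_trans ih hloop
        have heq : mr + j * (q * l + mr) + (q * l + mr) = mr + (j + 1) * (q * l + mr) := by ring
        rwa [heq] at this
    obtain ⟨q', rfl⟩ : ∃ q', q = q' + 1 := ⟨q - 1, by omega⟩
    refine ⟨mr + q' * l, ?_⟩
    have := hiter q'
    have heq : mr + q' * ((q' + 1) * l + mr) = (q' + 1) * (mr + q' * l) := by ring
    rw [hQpow]
    rwa [heq] at this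
  have hpair : ∀ c d : ↥C, ∃ N : ℕ, ∀ k, N ≤ k → 0 < (Q ^ k) c.val d.val := by
    intro c d
    obtain ⟨s, hs⟩ := hret c
    obtain ⟨t, ht⟩ := d.2
    refine ⟨s + t, fun k hk => ?_⟩
    have heq : k = s + (k - s - t) + t := by omega
    rw [heq]
    exact pos_pow_trans (pos_pow_trans hs (hQaa (k - s - t))) ht
  set K : ℕ := 1 + Finset.univ.sup (fun p : ↥C × ↥C => (hpair p.1 p.2).choose) with hK_def
  have hK1 : 1 ≤ K := Nat.le_add_right 1 _
  have hKprim : ∀ k, K ≤ k → ∀ c d : ↥C, 0 < (P ^ k) c d := by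
    intro k hk c d
    rw [hblock]
    apply (hpair c d).choose_spec k
    calc (hpair c d).choose
        ≤ Finset.univ.sup (fun p : ↥C × ↥C => (hpair p.1 p.2).choose) :=
          Finset.le_sup (f := fun p : ↥C × ↥C => (hpair p.1 p.2).choose)
            (Finset.mem_univ (c, d))
      _ ≤ K := by omega
      _ ≤ k := hk
  -- real matrices
  set Nr : Matrix ↥C ↥C ℝ := fun c d => ((P c d : ℕ) : ℝ) with hNr_def
  have hNrpow : ∀ (k : ℕ) (c d : ↥C), (Nr ^ k) c d = (((P ^ k) c d : ℕ) : ℝ) := by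
    intro k
    induction k with
    | zero =>
      intro c d
      by_cases h : c = d <;> simp [Matrix.one_apply, h]
    | succ k ih =>
      intro c d
      rw [pow_succ, pow_succ, Matrix.mul_apply, Matrix.mul_apply]
      push_cast
      apply Finset.sum_congr rfl
      intro e _
      rw [ih c e, hNr_def]
  set A : Matrix ↥C ↥C ℝ := Nr.transpose with hA_def
  have hApow : ∀ (k : ℕ) (c d : ↥C), (A ^ k) c d = (((P ^ k) d c : ℕ) : ℝ) := by
    intro k c d
    rw [hA_def, ← Matrix.transpose_pow, Matrix.transpose_apply, hNrpow]
  set a' : ↥C := ⟨a, haC⟩ with ha'_def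
  set R : Matrix ↥C ↥C ℝ := A ^ K with hR_def
  have hRpos : ∀ c d : ↥C, 0 < R c d := by
    intro c d
    rw [hR_def, hApow]
    exact_mod_cast hKprim K le_rfl d c
  set x0 : ↥C → ℝ := fun c => (((P ^ K) a' c : ℕ) : ℝ) with hx0_def
  have hx0pos : ∀ c, 0 < x0 c := by
    intro c
    show (0:ℝ) < (((P ^ K) a' c : ℕ) : ℝ)
    exact_mod_cast hKprim K le_rfl a' c
  have hy : ∀ (k : ℕ) (c : ↥C), ((R ^ k).mulVec x0) c = (((P ^ (K + K * k)) a' c : ℕ) : ℝ) := by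
    intro k c
    rw [hR_def, ← pow_mul, mulVec_apply']
    have : ∀ d : ↥C, (A ^ (K * k)) c d * x0 d = (((P ^ K) a' d * (P ^ (K * k)) d c : ℕ) : ℝ) := by
      intro d
      rw [hApow, hx0_def]
      push_cast
      ring
    rw [Finset.sum_congr rfl (fun d _ => this d), ← Nat.cast_sum]
    congr 1
    conv_rhs => rw [pow_add]
    rw [Matrix.mul_apply]
  obtain ⟨lam, hlam_pos, hlam_lb, hconv⟩ := key_convergence R hRpos x0 hx0pos
  choose L hLpos hLt using hconv
  have hlam1 : 1 ≤ lam := by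
    apply hlam_lb
    intro c
    rw [one_mul]
    have h1 : R.mulVec x0 c = (((P ^ (K + K * 1)) a' c : ℕ) : ℝ) := by
      rw [← hy 1, pow_one]
    rw [h1]
    show (((P ^ K) a' c : ℕ) : ℝ) ≤ (((P ^ (K + K * 1)) a' c : ℕ) : ℝ)
    have h2 : (P ^ K) a' c * (P ^ K) c c ≤ (P ^ (K + K)) a' c := by
      have := entry_mul_le (P ^ K) (P ^ K) a' c c
      rwa [← pow_add] at this
    have h3 : 1 ≤ (P ^ K) c c := hKprim K le_rfl c c
    have h4 : (P ^ K) a' c ≤ (P ^ (K + K * 1)) a' c := by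
      calc (P ^ K) a' c = (P ^ K) a' c * 1 := by ring
        _ ≤ (P ^ K) a' c * (P ^ K) c c := by exact Nat.mul_le_mul_left _ h3
        _ ≤ (P ^ (K + K)) a' c := h2
        _ = (P ^ (K + K * 1)) a' c := by norm_num
    exact_mod_cast h4
  -- the modulus
  refine ⟨q * K, Nat.mul_pos hq0 (lt_of_lt_of_le one_pos hK1), ?_⟩
  intro rr hrr
  set r : ℕ := rr % q with hr_def
  set s : ℕ := rr / q with hs_def
  have hsK : s < K := by
    rw [hs_def, Nat.div_lt_iff_lt_mul hq0, mul_comm K q]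
    exact hrr
  have hrreq : rr = q * s + r := by
    rw [hr_def, hs_def]
    exact (Nat.div_add_mod rr q).symm
  -- the sum decomposition, valid for all j
  have hsum : ∀ u : ℕ, (M ^ (q * u + r)) a b
      = ∑ c : ↥C, (Q ^ u) a c.val * (M ^ r) c.val b := by
    intro u
    rw [pow_add, Matrix.mul_apply]
    have hqu : ∀ e, (M ^ (q * u)) a e = (Q ^ u) a e := by
      intro e; rw [hQpow]
    rw [Finset.sum_congr rfl (fun e _ => by rw [hqu e])]
    apply sum_restrict C (fun e => (Q ^ u) a e * (M ^ r) e b)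
    intro e he
    have h1 : (Q ^ u) a e ≠ 0 := fun hz => he (by rw [hz, zero_mul])
    exact ⟨u, Nat.pos_of_ne_zero h1⟩
  -- rewrite in terms of the vector w_i = (R^i).mulVec x0
  set β : ↥C → ℕ := fun c => (M ^ r) c.val b with hβ_def
  have hglue : ∀ j : ℕ, 1 ≤ j →
      ((M ^ (q * K * j + rr)) a b : ℝ)
        = ∑ c : ↥C, ∑ d : ↥C, ((R ^ (j - 1)).mulVec x0) d * (((P ^ s) d c * β c : ℕ) : ℝ) := by
    intro j hj
    obtain ⟨j', rfl⟩ : ∃ j', j = j' + 1 := ⟨j - 1, by omega⟩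
    rw [Nat.add_sub_cancel]
    have hexp : q * K * (j' + 1) + rr = q * (K * (j' + 1) + s) + r := by rw [hrreq]; ring
    rw [hexp, hsum]
    have hterm : ∀ c : ↥C, (Q ^ (K * (j' + 1) + s)) a c.val * β c
        = ∑ d : ↥C, (P ^ (K + K * j')) a' d * ((P ^ s) d c * β c) := by
      intro c
      rw [show (Q ^ (K * (j' + 1) + s)) a c.val = (P ^ (K * (j' + 1) + s)) a' c from
        (hblock _ a' c).symm]
      rw [show K * (j' + 1) + s = (K + K * j') + s from by ring, pow_add, Matrix.mul_apply,
        Finset.sum_mul]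
      apply Finset.sum_congr rfl
      intro d _
      ring
    rw [Finset.sum_congr rfl (fun c _ => hterm c)]
    push_cast
    apply Finset.sum_congr rfl
    intro c _
    apply Finset.sum_congr rfl
    exact fun d _ => by rw [hy j' d]
  set γ : ℝ := ∑ c : ↥C, ∑ d : ↥C, L d * (((P ^ s) d c * β c : ℕ) : ℝ) with hγ_def
  have hγ0 : 0 ≤ γ := by
    apply Finset.sum_nonneg
    intro c _
    apply Finset.sum_nonneg
    intro d _
    exact mul_nonneg (hLpos d).le (Nat.cast_nonneg _)
  have hγt : Tendsto (fun i : ℕ => (∑ c : ↥C, ∑ d : ↥C,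
      ((R ^ i).mulVec x0) d * (((P ^ s) d c * β c : ℕ) : ℝ)) / lam ^ i) atTop (nhds γ) := by
    have heq : ∀ i : ℕ, (∑ c : ↥C, ∑ d : ↥C,
        ((R ^ i).mulVec x0) d * (((P ^ s) d c * β c : ℕ) : ℝ)) / lam ^ i
        = ∑ c : ↥C, ∑ d : ↥C,
          (((R ^ i).mulVec x0) d / lam ^ i) * (((P ^ s) d c * β c : ℕ) : ℝ) := by
      intro i
      rw [Finset.sum_div]
      apply Finset.sum_congr rfl
      intro c _
      rw [Finset.sum_div]
      apply Finset.sum_congr rfl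
      intro d _
      ring
    rw [show γ = ∑ c : ↥C, ∑ d : ↥C, L d * (((P ^ s) d c * β c : ℕ) : ℝ) from hγ_def]
    apply Tendsto.congr (fun i => (heq i).symm)
    apply tendsto_finset_sum
    intro c _
    apply tendsto_finset_sum
    intro d _
    exact (hLt d).mul_const _
  by_cases hγz : γ = 0
  · left
    -- all coefficients vanish
    have hcoef : ∀ c d : ↥C, ((P ^ s) d c * β c : ℕ) = 0 := by
      intro c d
      have h1 := (Finset.sum_eq_zero_iff_of_nonneg
        (fun c (_ : c ∈ Finset.univ) => Finset.sum_nonneg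
          (fun d _ => mul_nonneg (hLpos d).le (Nat.cast_nonneg ((P ^ s) d c * β c))))).mp
        (by rw [← hγ_def, hγz]) c (Finset.mem_univ c)
      have h2 := (Finset.sum_eq_zero_iff_of_nonneg
        (fun d (_ : d ∈ Finset.univ) =>
          mul_nonneg (hLpos d).le (Nat.cast_nonneg ((P ^ s) d c * β c)))).mp
        h1 d (Finset.mem_univ d)
      have h3 := (hLpos d).ne'
      have h4 : (((P ^ s) d c * β c : ℕ) : ℝ) = 0 := by
        rcases mul_eq_zero.mp h2 with h | h
        · exact absurd h h3
        · exact h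
      exact_mod_cast h4
    rw [eventually_atTop]
    refine ⟨1, fun j hj => ?_⟩
    rw [hglue j hj]
    apply Finset.sum_eq_zero
    intro c _
    apply Finset.sum_eq_zero
    intro d _
    rw [hcoef c d]
    simp
  · right
    have hγpos : 0 < γ := lt_of_le_of_ne hγ0 (Ne.symm hγz)
    refine ⟨γ / lam, div_pos hγpos hlam_pos, 0, lam, hlam1, ?_⟩
    have hbase : Tendsto (fun i : ℕ => (∑ c : ↥C, ∑ d : ↥C,
        ((R ^ i).mulVec x0) d * (((P ^ s) d c * β c : ℕ) : ℝ)) / (γ * lam ^ i))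
        atTop (nhds 1) := by
      have h := hγt.div_const γ
      rw [div_self hγz] at h
      apply Tendsto.congr ?_ h
      intro i
      rw [div_div, mul_comm (lam ^ i) γ]
    have hcomp := hbase.comp (tendsto_sub_atTop_nat 1)
    apply Tendsto.congr' ?_ hcomp
    rw [eventuallyEq_iff_exists_mem]
    refine ⟨{j | 1 ≤ j}, mem_atTop 1, fun j hj => ?_⟩
    simp only [Function.comp_apply]
    have hj' : 1 ≤ j := hj
    rw [← hglue j hj']
    have hlsplit : lam ^ j = lam * lam ^ (j - 1) := by
      conv_lhs => rw [show j = (j - 1) + 1 from by omega]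
      rw [pow_succ]
      ring
    rw [pow_zero, mul_one, hlsplit]
    have hden : γ / lam * (lam * lam ^ (j - 1)) = γ * lam ^ (j - 1) := by
      field_simp
    rw [hden]


end NatMatrix

section Graph

variable {V E : Type*} [Fintype V] [Fintype E]

/-- adjacency matrix of the graph given by `src`, `tgt`. -/
noncomputable def adj (src tgt : E → V) : Matrix V V ℕ :=
  fun u w => Fintype.card {e : E // src e = u ∧ tgt e = w}

lemma isPath_tail (src tgt : E → V) {n : ℕ} {p : Fin (n + 1) → E} {u v : V}
    (hp : Paper.IsPath src tgt u v p) :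
    Paper.IsPath src tgt (tgt (p ⟨0, Nat.succ_pos n⟩)) v (fun i : Fin n => p i.succ) := by
  obtain ⟨h1, h2, h3⟩ := hp
  refine ⟨?_, ?_, ?_⟩
  · intro i hi
    exact h1 (i + 1) (Nat.succ_lt_succ hi)
  · intro h
    constructor
    · exact (h1 0 (Nat.succ_lt_succ h)).symm
    · have he : (Fin.succ ⟨n - 1, Nat.sub_lt h one_pos⟩ : Fin (n + 1))
          = ⟨n, Nat.lt_succ_self n⟩ := by
        apply Fin.ext
        simp
        omega
      show tgt (p (Fin.succ ⟨n - 1, Nat.sub_lt h one_pos⟩)) = v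
      rw [he]
      exact (h2 (Nat.succ_pos n)).2
  · intro hn
    subst hn
    exact (h2 (Nat.succ_pos 0)).2

lemma isPath_cons (src tgt : E → V) {n : ℕ} {e : E} {p : Fin n → E} {u w v : V}
    (he1 : src e = u) (he2 : tgt e = w) (hp : Paper.IsPath src tgt w v p) :
    Paper.IsPath src tgt u v (Fin.cons e p) := by
  obtain ⟨h1, h2, h3⟩ := hp
  refine ⟨?_, ?_, fun h => absurd h (Nat.succ_ne_zero n)⟩
  · intro i hi
    match i, hi with
    | 0, hi =>
      have h0n : 0 < n := by omega
      have hh : tgt e = src (p ⟨0, h0n⟩) := by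
        rw [he2]
        exact ((h2 h0n).1).symm
      exact hh
    | (i + 1), hi =>
      have hi' : i + 1 < n := by omega
      exact h1 i hi'
  · intro _
    refine ⟨he1, ?_⟩
    match n, p, h1, h2, h3 with
    | 0, p, h1, h2, h3 =>
      have hh : tgt e = v := by
        rw [he2]
        exact h3 rfl
      exact hh
    | (m + 1), p, h1, h2, h3 =>
      exact (h2 (Nat.succ_pos m)).2

noncomputable def pathEquiv (src tgt : E → V) (u v : V) (n : ℕ) :
    {p : Fin (n + 1) → E // Paper.IsPath src tgt u v p} ≃
      Σ w : V, ({e : E // src e = u ∧ tgt e = w} ×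
        {p : Fin n → E // Paper.IsPath src tgt w v p}) where
  toFun := fun ⟨p, hp⟩ => ⟨tgt (p ⟨0, Nat.succ_pos n⟩),
    ⟨⟨p ⟨0, Nat.succ_pos n⟩, (hp.2.1 (Nat.succ_pos n)).1, rfl⟩,
     ⟨fun i => p i.succ, isPath_tail src tgt hp⟩⟩⟩
  invFun := fun ⟨w, ⟨e, he⟩, ⟨p, hp⟩⟩ =>
    ⟨Fin.cons e p, isPath_cons src tgt he.1 he.2 hp⟩
  left_inv := by
    rintro ⟨p, hp⟩
    apply Subtype.ext
    show Fin.cons (p ⟨0, Nat.succ_pos n⟩) (fun i => p i.succ) = p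
    funext i
    refine Fin.cases ?_ ?_ i
    · rfl
    · intro j
      rw [Fin.cons_succ]
  right_inv := by
    rintro ⟨w, ⟨e, he⟩, ⟨p, hp⟩⟩
    have hw : tgt (Fin.cons (α := fun _ => E) e p ⟨0, Nat.succ_pos n⟩) = w := he.2
    subst hw
    dsimp only
    refine congrArg (Sigma.mk _) ?_
    refine Prod.ext ?_ ?_
    · exact Subtype.ext rfl
    · refine Subtype.ext ?_
      funext i
      exact @Fin.cons_succ n (fun _ => E) e p i

lemma numPaths_succ (src tgt : E → V) (u v : V) (n : ℕ) :
    Paper.numPaths src tgt u v (n + 1)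
      = ∑ w : V, adj src tgt u w * Paper.numPaths src tgt w v n := by
  classical
  rw [Paper.numPaths, Fintype.card_congr (pathEquiv src tgt u v n), Fintype.card_sigma]
  apply Finset.sum_congr rfl
  intro w _
  rw [Fintype.card_prod]
  congr 1

lemma numPaths_eq_pow (src tgt : E → V) (v : V) (n : ℕ) :
    ∀ u : V, Paper.numPaths src tgt u v n = ((adj src tgt) ^ n) u v := by
  classical
  induction n with
  | zero =>
    intro u
    rw [pow_zero]
    rcases eq_or_ne u v with h | h
    · subst h
      rw [Matrix.one_apply_eq]
      apply Fintype.card_eq_one_iff.mpr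
      refine ⟨⟨fun i => i.elim0, ?_⟩, ?_⟩
      · exact ⟨fun i hi => absurd hi (by omega), fun h => absurd h (by omega), fun _ => rfl⟩
      · rintro ⟨p, hp⟩
        apply Subtype.ext
        funext i
        exact i.elim0
    · rw [Matrix.one_apply_ne h]
      apply Fintype.card_eq_zero_iff.mpr
      constructor
      rintro ⟨p, hp⟩
      exact h (hp.2.2 rfl)
  | succ n ih =>
    intro u
    rw [numPaths_succ, pow_succ', Matrix.mul_apply]
    apply Finset.sum_congr rfl
    intro w _
    rw [ih w]

end Graph


end PFAux

open Paper in
/-- **Theorem (regularity of path counts in strongly connected graphs).**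
If a finite directed graph is strongly connected (for any two vertices `u, v` there is a
path from `u` to `v`), then for any vertices `u, v` the sequence `{#L^G_{u,v,n}}ₙ` of
path counts is regular.  Equivalently, for an irreducible square matrix `M` with
nonnegative integer entries, every entry sequence `{(Mⁿ)_{u,v}}ₙ` is regular. -/
theorem strongly_connected_path_counts_regular
    {V E : Type*} [Fintype V] [Fintype E] (src tgt : E → V)
    (hconn : ∀ u v : V, ∃ (n : ℕ) (p : Fin n → E), IsPath src tgt u v p)
    (u v : V)
    {W : Type*} [Fintype W] [DecidableEq W] (M : Matrix W W ℕ)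
    (hirr : ∀ a b : W, ∃ n : ℕ, 0 < (M ^ n) a b) (a b : W) :
    RegularSeq (fun n => (numPaths src tgt u v n : ℝ)) ∧
      RegularSeq (fun n => ((M ^ n) a b : ℝ)) := by
  constructor
  · have hirr' : ∀ u' v' : V, ∃ n : ℕ, 0 < ((PFAux.adj src tgt) ^ n) u' v' := by
      intro u' v'
      obtain ⟨n, p, hp⟩ := hconn u' v'
      refine ⟨n, ?_⟩
      rw [← PFAux.numPaths_eq_pow src tgt v' n u']
      rw [Paper.numPaths]
      exact Fintype.card_pos_iff.mpr ⟨⟨p, hp⟩⟩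
    have hx : (fun n => (Paper.numPaths src tgt u v n : ℝ))
        = fun n => ((((PFAux.adj src tgt)) ^ n) u v : ℝ) := by
      funext n
      rw [PFAux.numPaths_eq_pow src tgt v n u]
    rw [hx, Paper.RegularSeq]
    exact PFAux.regular_matrix (PFAux.adj src tgt) hirr' u v
  · rw [Paper.RegularSeq]
    exact PFAux.regular_matrix M hirr a b
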